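/- Let n ≥ 3 be an integer. There exists a matroid whose ground set is the collection of all 4-element subsets of {1,…,n}, and whose bases are exactly the collections B of 4-element subsets of {1,…,n} with |B| = n − 3 such that |⋃_{S∈J} S| ≥ |J| + 3 for every nonempty subcollection J ⊆ B. -/

import Mathlib

open Finset

/-- The independence predicate: all members are 4-sets and the Cerberus condition holds. -/
private def Cerb (n : ℕ) (I : Finset (Finset (Fin n))) : Prop :=
  (∀ S ∈ I, S.card = 4) ∧ ∀ J ⊆ I, J.Nonempty → J.card + 3 ≤ (J.biUnion id).card

private lemma cerb_empty (n : ℕ) : Cerb n ∅ := by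
  refine ⟨by simp, fun J hJ hne => ?_⟩
  rw [Finset.subset_empty.mp hJ] at hne
  exact absurd rfl hne.ne_empty

private lemma cerb_subset {n : ℕ} {I K : Finset (Finset (Fin n))} (h : Cerb n I) (hKI : K ⊆ I) :
    Cerb n K :=
  ⟨fun S hS => h.1 S (hKI hS), fun J hJ hne => h.2 J (hJ.trans hKI) hne⟩

private lemma cerb_card_le {n : ℕ} {I : Finset (Finset (Fin n))} (h : Cerb n I) :
    I.card ≤ n - 3 := by
  rcases I.eq_empty_or_nonempty with rfl | hne
  · simp
  · have h1 := h.2 I Subset.rfl hne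
    have h2 : (I.biUnion id).card ≤ n := by
      have := Finset.card_le_univ (I.biUnion id)
      simpa using this
    omega

private lemma biUnion_union_eq {n : ℕ} (F1 F2 : Finset (Finset (Fin n))) :
    (F1 ∪ F2).biUnion id = F1.biUnion id ∪ F2.biUnion id := by
  ext x
  simp only [Finset.mem_biUnion, Finset.mem_union, id]
  constructor
  · rintro ⟨S, hS | hS, hx⟩
    · exact Or.inl ⟨S, hS, hx⟩
    · exact Or.inr ⟨S, hS, hx⟩
  · rintro (⟨S, hS, hx⟩ | ⟨S, hS, hx⟩)
    · exact ⟨S, Or.inl hS, hx⟩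
    · exact ⟨S, Or.inr hS, hx⟩

/-- If two tight subfamilies of a Cerberus family intersect, their union is tight. -/
private lemma tight_union {n : ℕ} {I F1 F2 : Finset (Finset (Fin n))}
    (hI : ∀ J ⊆ I, J.Nonempty → J.card + 3 ≤ (J.biUnion id).card)
    (h1 : F1 ⊆ I) (h2 : F2 ⊆ I)
    (t1 : (F1.biUnion id).card = F1.card + 3)
    (t2 : (F2.biUnion id).card = F2.card + 3)
    (hne : (F1 ∩ F2).Nonempty) :
    ((F1 ∪ F2).biUnion id).card = (F1 ∪ F2).card + 3 := by
  have hsubI : F1 ∩ F2 ⊆ I := (Finset.inter_subset_left).trans h1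
  have hlow : (F1 ∩ F2).card + 3 ≤ ((F1 ∩ F2).biUnion id).card := hI _ hsubI hne
  have hsub : ((F1 ∩ F2).biUnion id) ⊆ (F1.biUnion id) ∩ (F2.biUnion id) :=
    Finset.subset_inter
      (Finset.biUnion_subset_biUnion_of_subset_left _ Finset.inter_subset_left)
      (Finset.biUnion_subset_biUnion_of_subset_left _ Finset.inter_subset_right)
  have hcs := Finset.card_le_card hsub
  have hU : ((F1 ∪ F2).biUnion id) = F1.biUnion id ∪ F2.biUnion id := biUnion_union_eq F1 F2
  have hc1 := Finset.card_union_add_card_inter (F1.biUnion id) (F2.biUnion id)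
  have hc2 := Finset.card_union_add_card_inter F1 F2
  have hup : ((F1 ∪ F2).biUnion id).card ≤ (F1 ∪ F2).card + 3 := by
    rw [hU]; omega
  have hlo : (F1 ∪ F2).card + 3 ≤ ((F1 ∪ F2).biUnion id).card :=
    hI _ (Finset.union_subset h1 h2) (hne.mono (Finset.inter_subset_left.trans Finset.subset_union_left))
  omega

/-- Augmentation for the Cerberus independence predicate. -/
private lemma cerb_aug {n : ℕ} {I J : Finset (Finset (Fin n))}
    (hI : Cerb n I) (hJ : Cerb n J) (hlt : I.card < J.card) :
    ∃ e ∈ J, e ∉ I ∧ Cerb n (insert e I) := by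
  classical
  by_contra hcon
  push_neg at hcon
  -- Step A : every e ∈ J is covered by a tight subfamily of I.
  have stepA : ∀ e ∈ J, ∃ F, F ⊆ I ∧ (F.biUnion id).card = F.card + 3 ∧ e ⊆ F.biUnion id := by
    intro e he
    by_cases heI : e ∈ I
    · refine ⟨{e}, by simpa using heI, by simp [hI.1 e heI], by simp⟩
    · have hni := hcon e he heI
      rw [Cerb] at hni
      push_neg at hni
      have h4 : ∀ S ∈ insert e I, S.card = 4 := by
        intro S hS
        rcases Finset.mem_insert.mp hS with rfl | hS
        · exact hJ.1 _ he
        · exact hI.1 _ hS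
      obtain ⟨K, hKsub, hKne, hKlt⟩ := hni h4
      have heK : e ∈ K := by
        by_contra heK
        have hKI : K ⊆ I := fun x hx =>
          (Finset.mem_insert.mp (hKsub hx)).resolve_left (by rintro rfl; exact heK hx)
        exact absurd (hI.2 K hKI hKne) (by omega)
      set F := K.erase e with hFdef
      have hFI : F ⊆ I := by
        intro x hx
        rcases Finset.mem_insert.mp (hKsub (Finset.mem_of_mem_erase hx)) with rfl | h
        · exact absurd hx (Finset.notMem_erase _ _)
        · exact h
      have hKF : K = insert e F := (Finset.insert_erase heK).symm
      have hecard : e.card = 4 := hJ.1 e he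
      have hFne : F.Nonempty := by
        rcases F.eq_empty_or_nonempty with hF0 | h
        · rw [hKF, hF0] at hKlt
          simp only [Finset.biUnion_insert, Finset.biUnion_empty, Finset.union_empty,
            Finset.card_insert_of_notMem (Finset.notMem_empty e), Finset.card_empty, id] at hKlt
          omega
        · exact h
      have hFc : F.card + 3 ≤ (F.biUnion id).card := hI.2 F hFI hFne
      have hKcard : K.card = F.card + 1 := by
        rw [hKF, Finset.card_insert_of_notMem (Finset.notMem_erase _ _)]
      have hFsubK : F.biUnion id ⊆ K.biUnion id :=
        Finset.biUnion_subset_biUnion_of_subset_left _ (Finset.erase_subset _ _)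
      have heq : F.biUnion id = K.biUnion id :=
        Finset.eq_of_subset_of_card_le hFsubK (by omega)
      have hcards := congrArg Finset.card heq
      refine ⟨F, hFI, by omega, ?_⟩
      rw [heq, hKF]
      intro x hx
      rw [Finset.mem_biUnion]
      exact ⟨e, Finset.mem_insert_self _ _, hx⟩
  -- Step B : pick a maximum-cardinality tight cover for each e ∈ J.
  have stepB : ∀ e, ∃ M : Finset (Finset (Fin n)), e ∈ J →
      (M ⊆ I ∧ (M.biUnion id).card = M.card + 3 ∧ e ⊆ M.biUnion id) ∧
      ∀ M', M' ⊆ I → (M'.biUnion id).card = M'.card + 3 → e ⊆ M'.biUnion id →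
        M'.card ≤ M.card := by
    intro e
    by_cases he : e ∈ J
    · obtain ⟨F, hF1, hF2, hF3⟩ := stepA e he
      set s := I.powerset.filter
        (fun F => (F.biUnion id).card = F.card + 3 ∧ e ⊆ F.biUnion id) with hs
      have hsne : s.Nonempty :=
        ⟨F, by simp only [hs, Finset.mem_filter, Finset.mem_powerset]; exact ⟨hF1, hF2, hF3⟩⟩
      obtain ⟨M, hM, hMmax⟩ := Finset.exists_max_image s Finset.card hsne
      simp only [hs, Finset.mem_filter, Finset.mem_powerset] at hM
      refine ⟨M, fun _ => ⟨⟨hM.1, hM.2.1, hM.2.2⟩, fun M' h1 h2 h3 => ?_⟩⟩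
      exact hMmax M' (by simp only [hs, Finset.mem_filter, Finset.mem_powerset]; exact ⟨h1, h2, h3⟩)
    · exact ⟨∅, fun h => absurd h he⟩
  choose Mf hMf using stepB
  -- Step C : the chosen tight families are pairwise equal or disjoint.
  have stepC : ∀ e ∈ J, ∀ f ∈ J, Mf e ≠ Mf f → Disjoint (Mf e) (Mf f) := by
    intro e he f hf hne
    rw [Finset.disjoint_iff_inter_eq_empty]
    by_contra hint
    have hinter : ((Mf e) ∩ (Mf f)).Nonempty := Finset.nonempty_iff_ne_empty.mpr hint
    obtain ⟨⟨heI', het, hecov⟩, hemax⟩ := hMf e he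
    obtain ⟨⟨hfI', hft, hfcov⟩, hfmax⟩ := hMf f hf
    have htu := tight_union hI.2 heI' hfI' het hft hinter
    have hsubI : Mf e ∪ Mf f ⊆ I := Finset.union_subset heI' hfI'
    have hcove : e ⊆ (Mf e ∪ Mf f).biUnion id :=
      hecov.trans (Finset.biUnion_subset_biUnion_of_subset_left _ Finset.subset_union_left)
    have hcovf : f ⊆ (Mf e ∪ Mf f).biUnion id :=
      hfcov.trans (Finset.biUnion_subset_biUnion_of_subset_left _ Finset.subset_union_right)
    have h1 := hemax _ hsubI htu hcove
    have h2 := hfmax _ hsubI htu hcovf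
    have he1 : Mf e = Mf e ∪ Mf f :=
      Finset.eq_of_subset_of_card_le Finset.subset_union_left h1
    have he2 : Mf f = Mf e ∪ Mf f :=
      Finset.eq_of_subset_of_card_le Finset.subset_union_right h2
    exact hne (he1.trans he2.symm)
  -- Step D : counting.
  set 𝓜 := J.image Mf with h𝓜
  have hMmem : ∀ M ∈ 𝓜, ∃ e ∈ J, Mf e = M := fun M hM => Finset.mem_image.mp hM
  have hMsub : ∀ M ∈ 𝓜, M ⊆ I := by
    intro M hM
    obtain ⟨e, he, rfl⟩ := hMmem M hM
    exact ((hMf e he).1).1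
  have hMt : ∀ M ∈ 𝓜, (M.biUnion id).card = M.card + 3 := by
    intro M hM
    obtain ⟨e, he, rfl⟩ := hMmem M hM
    exact ((hMf e he).1).2.1
  have hdisj : ∀ M1 ∈ 𝓜, ∀ M2 ∈ 𝓜, M1 ≠ M2 → Disjoint M1 M2 := by
    intro M1 hM1 M2 hM2 hne
    obtain ⟨e, he, rfl⟩ := hMmem M1 hM1
    obtain ⟨f, hf, rfl⟩ := hMmem M2 hM2
    exact stepC e he f hf hne
  have hJsub : J ⊆ 𝓜.biUnion (fun M => J.filter (fun e => e ⊆ M.biUnion id)) := by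
    intro e he
    exact Finset.mem_biUnion.mpr ⟨Mf e, Finset.mem_image_of_mem _ he,
      Finset.mem_filter.mpr ⟨he, ((hMf e he).1).2.2⟩⟩
  have hJM : ∀ M ∈ 𝓜, (J.filter (fun e => e ⊆ M.biUnion id)).card ≤ M.card := by
    intro M hM
    set JM := J.filter (fun e => e ⊆ M.biUnion id) with hJMdef
    rcases JM.eq_empty_or_nonempty with h0 | hne
    · rw [h0]; simp
    · have h1 : JM.card + 3 ≤ (JM.biUnion id).card := hJ.2 _ (Finset.filter_subset _ _) hne
      have h2 : JM.biUnion id ⊆ M.biUnion id := by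
        intro x hx
        obtain ⟨e, he, hxe⟩ := Finset.mem_biUnion.mp hx
        exact (Finset.mem_filter.mp he).2 hxe
      have h3 := Finset.card_le_card h2
      have h4 := hMt M hM
      omega
  have hsum1 : J.card ≤ ∑ M ∈ 𝓜, (J.filter (fun e => e ⊆ M.biUnion id)).card :=
    le_trans (Finset.card_le_card hJsub) (Finset.card_biUnion_le)
  have hsum2 : ∑ M ∈ 𝓜, (J.filter (fun e => e ⊆ M.biUnion id)).card ≤ ∑ M ∈ 𝓜, M.card :=
    Finset.sum_le_sum hJM
  have hsum3 : ∑ M ∈ 𝓜, M.card = (𝓜.biUnion id).card := (Finset.card_biUnion hdisj).symm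
  have hsum4 : (𝓜.biUnion id).card ≤ I.card := by
    apply Finset.card_le_card
    intro x hx
    obtain ⟨M, hM, hxM⟩ := Finset.mem_biUnion.mp hx
    exact hMsub M hM hxM
  omega

/-- A canonical Cerberus family of size `n - 3`. -/
private lemma cerb_canonical (n : ℕ) (hn : 3 ≤ n) :
    ∃ C : Finset (Finset (Fin n)), Cerb n C ∧ C.card = n - 3 := by
  classical
  set B3 : Finset (Fin n) := Finset.univ.filter (fun i : Fin n => (i : ℕ) < 3) with hB3
  have hmemB3 : ∀ i : Fin n, i ∈ B3 ↔ (i : ℕ) < 3 := by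
    intro i; simp [hB3]
  have hB3card : B3.card = 3 := by
    have : B3.map Fin.valEmbedding = Finset.range 3 := by
      ext a
      simp only [Finset.mem_map, Finset.mem_range, Fin.valEmbedding_apply]
      constructor
      · rintro ⟨i, hi, rfl⟩
        exact (hmemB3 i).mp hi
      · intro ha
        exact ⟨⟨a, by omega⟩, (hmemB3 _).mpr ha, rfl⟩
    have := congrArg Finset.card this
    rwa [Finset.card_map, Finset.card_range] at this
  set A0 : Finset (Fin n) := Finset.univ.filter (fun i : Fin n => 3 ≤ (i : ℕ)) with hA0
  have hmemA0 : ∀ i : Fin n, i ∈ A0 ↔ 3 ≤ (i : ℕ) := by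
    intro i; simp [hA0]
  have hA0card : A0.card = n - 3 := by
    have : A0.map Fin.valEmbedding = Finset.Ico 3 n := by
      ext a
      simp only [Finset.mem_map, Finset.mem_Ico, Fin.valEmbedding_apply]
      constructor
      · rintro ⟨i, hi, rfl⟩
        exact ⟨(hmemA0 i).mp hi, i.isLt⟩
      · rintro ⟨h3, hlt⟩
        exact ⟨⟨a, hlt⟩, (hmemA0 _).mpr h3, rfl⟩
    have := congrArg Finset.card this
    rwa [Finset.card_map, Nat.card_Ico] at this
  -- the injection
  have hinj : ∀ i ∈ A0, ∀ j ∈ A0, insert i B3 = insert j B3 → i = j := by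
    intro i hi j hj hij
    have hiB3 : i ∉ B3 := by rw [hmemB3]; have := (hmemA0 i).mp hi; omega
    have : i ∈ insert j B3 := by rw [← hij]; exact Finset.mem_insert_self _ _
    rcases Finset.mem_insert.mp this with h | h
    · exact h
    · exact absurd h hiB3
  refine ⟨A0.image (fun i => insert i B3), ⟨?_, ?_⟩, ?_⟩
  · intro S hS
    obtain ⟨i, hi, rfl⟩ := Finset.mem_image.mp hS
    have hiB3 : i ∉ B3 := by rw [hmemB3]; have := (hmemA0 i).mp hi; omega
    rw [Finset.card_insert_of_notMem hiB3, hB3card]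
  · intro J hJsub hJne
    set A := A0.filter (fun i => insert i B3 ∈ J) with hA
    have hJeq : J = A.image (fun i => insert i B3) := by
      apply Finset.Subset.antisymm
      · intro S hS
        obtain ⟨i, hi, rfl⟩ := Finset.mem_image.mp (hJsub hS)
        exact Finset.mem_image_of_mem _ (Finset.mem_filter.mpr ⟨hi, hS⟩)
      · intro S hS
        obtain ⟨i, hi, rfl⟩ := Finset.mem_image.mp hS
        exact (Finset.mem_filter.mp hi).2
    have hinjA : ∀ i ∈ A, ∀ j ∈ A, insert i B3 = insert j B3 → i = j := by
      intro i hi j hj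
      exact hinj i (Finset.mem_filter.mp hi).1 j (Finset.mem_filter.mp hj).1
    have hJcard : J.card = A.card := by
      rw [hJeq, Finset.card_image_of_injOn hinjA]
    have hAne : A.Nonempty := by
      obtain ⟨S, hS⟩ := hJne
      rw [hJeq] at hS
      obtain ⟨i, hi, _⟩ := Finset.mem_image.mp hS
      exact ⟨i, hi⟩
    have hbi : J.biUnion id = A ∪ B3 := by
      rw [hJeq, Finset.image_biUnion]
      ext x
      simp only [Finset.mem_biUnion, Finset.mem_union, Finset.mem_insert, id]
      constructor
      · rintro ⟨i, hi, rfl | hx⟩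
        · exact Or.inl hi
        · exact Or.inr hx
      · rintro (hx | hx)
        · exact ⟨x, hx, Or.inl rfl⟩
        · obtain ⟨i, hi⟩ := hAne
          exact ⟨i, hi, Or.inr hx⟩
    have hdisjAB : Disjoint A B3 := by
      rw [Finset.disjoint_left]
      intro i hiA hiB
      have h1 := (hmemA0 i).mp (Finset.mem_filter.mp hiA).1
      have h2 := (hmemB3 i).mp hiB
      omega
    have : (J.biUnion id).card = A.card + 3 := by
      rw [hbi, Finset.card_union_of_disjoint hdisjAB, hB3card]
    omega
  · rw [Finset.card_image_of_injOn hinj, hA0card]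

/-- There exists a matroid (the third Dilworth truncation `D_3(U_{n,n})` of the Boolean
matroid) whose ground set is the collection of all 4-element subsets of `{1, …, n}` and whose
bases are exactly the collections `B` of 4-element subsets with `|B| = n - 3` satisfying the
Cerberus condition `|⋃_{S ∈ J} S| ≥ |J| + 3` for every nonempty `J ⊆ B`. -/
theorem exists_dilworth_truncation_matroid (n : ℕ) (hn : 3 ≤ n) :
    ∃ M : Matroid (Finset (Fin n)),
      M.E = {S : Finset (Fin n) | S.card = 4} ∧
      ∀ B : Finset (Finset (Fin n)),
        (M.IsBase ↑B ↔
          ((∀ S ∈ B, S.card = 4) ∧ B.card = n - 3 ∧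
            ∀ J ⊆ B, J.Nonempty → J.card + 3 ≤ (J.biUnion id).card)) := by
  classical
  obtain ⟨C, hC, hCcard⟩ := cerb_canonical n hn
  set IM := IndepMatroid.ofFinset {S : Finset (Fin n) | S.card = 4} (Cerb n)
      (cerb_empty n) (fun I J hJ hIJ => cerb_subset hJ hIJ)
      (fun I J hI hJ h => cerb_aug hI hJ h)
      (fun I hI S hS => hI.1 S (Finset.mem_coe.mp hS)) with hIM
  have hindep : ∀ B : Finset (Finset (Fin n)), IM.matroid.Indep ↑B ↔ Cerb n B := by
    intro B
    rw [IndepMatroid.matroid_indep_iff, hIM]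
    exact IndepMatroid.ofFinset_indep ..
  refine ⟨IM.matroid, by simp [hIM]; rfl, fun B => ?_⟩
  constructor
  · intro hB
    have hind : Cerb n B := (hindep B).mp hB.indep
    have hle : B.card ≤ n - 3 := cerb_card_le hind
    have hge : n - 3 ≤ B.card := by
      by_contra hgt
      push_neg at hgt
      obtain ⟨e, heC, heB, hins⟩ := cerb_aug hind hC (by omega)
      have hins' : IM.matroid.Indep ↑(insert e B) := (hindep _).mpr hins
      have := hB.eq_of_subset_indep hins'
        (by rw [Finset.coe_insert]; exact Set.subset_insert _ _)
      rw [Finset.coe_insert] at this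
      have : e ∈ (B : Set (Finset (Fin n))) := this ▸ Set.mem_insert _ _
      exact heB (Finset.mem_coe.mp this)
    exact ⟨hind.1, by omega, hind.2⟩
  · rintro ⟨h4, hcard, hcerb⟩
    have hind : Cerb n B := ⟨h4, hcerb⟩
    rw [Matroid.isBase_iff_maximal_indep]
    refine ⟨(hindep B).mpr hind, fun X hX hBX => ?_⟩
    intro x hx
    have hXK : Cerb n (insert x B) := by
      have := (IndepMatroid.ofFinset_indep' {S : Finset (Fin n) | S.card = 4} (Cerb n)
        (cerb_empty n) (fun I J hJ hIJ => cerb_subset hJ hIJ)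
        (fun I J hI hJ h => cerb_aug hI hJ h)
        (fun I hI S hS => hI.1 S (Finset.mem_coe.mp hS))).mp (hIM ▸ hX)
      apply this
      rw [Finset.coe_insert]
      exact Set.insert_subset hx hBX
    by_contra hxB
    have hxB' : x ∉ B := fun h => hxB (Finset.mem_coe.mpr h)
    have := cerb_card_le hXK
    rw [Finset.card_insert_of_notMem hxB'] at this
    omega
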